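/- Let 𝔊₂ be the 7-dimensional real Lie algebra with basis (X₁,X₂,X₃,X₄,X₅,X,Y) and nonzero brackets [X₁,X₂]=X₄, [X₁,X₃]=X₅, [X,X₁]=X₁, [X,X₄]=X₄, [X,X₅]=X₅, [Y,X₃]=X₃, [Y,X₅]=X₅. Let F ∈ 𝔊₂* have coordinates (α₁,α₂,α₃,α₄,α₅,α,β) with α₄α₅ ≠ 0. Then Ω_F(𝔊₂) = { (x₁*,x₂*,x₃*,x₄*,x₅*,x*,y*) ∈ 𝔊₂* : x₂* − x₃*x₄*/x₅* = (α₂α₅ − α₃α₄)/α₅, α₄x₄* > 0, α₅x₅* > 0 } (here x₁*, x₃*, x*, y* range over all of ℝ). -/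

import Mathlib

noncomputable section


noncomputable section

/-- Half of the structure constants of the Lie algebra 𝔊₂ (indices `0,…,4` are
`X₁,…,X₅`, index `5` is `X`, index `6` is `Y`). -/
def g2half (i j : Fin 7) : Fin 7 → ℝ :=
  if i = 0 ∧ j = 1 then Pi.single 3 1      -- [X₁,X₂] = X₄
  else if i = 0 ∧ j = 2 then Pi.single 4 1 -- [X₁,X₃] = X₅
  else if i = 5 ∧ j = 0 then Pi.single 0 1 -- [X,X₁] = X₁
  else if i = 5 ∧ j = 3 then Pi.single 3 1 -- [X,X₄] = X₄
  else if i = 5 ∧ j = 4 then Pi.single 4 1 -- [X,X₅] = X₅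
  else if i = 6 ∧ j = 2 then Pi.single 2 1 -- [Y,X₃] = X₃
  else if i = 6 ∧ j = 4 then Pi.single 4 1 -- [Y,X₅] = X₅
  else 0

/-- The bracket `[Xᵢ, Xⱼ]` (in coordinates) of basis vectors of 𝔊₂. -/
def g2br (i j : Fin 7) : Fin 7 → ℝ := g2half i j - g2half j i

/-- The matrix (in the given basis) of the adjoint endomorphism `ad_U : T ↦ [U,T]`
of 𝔊₂, where `u` is the coordinate vector of `U`. -/
def adG2 (u : Fin 7 → ℝ) : Matrix (Fin 7) (Fin 7) ℝ :=
  Matrix.of fun k j => ∑ i, u i * g2br i j k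


/-- `Ω_F(𝔊₂) = {F_U : U ∈ 𝔊₂}` where `⟨F_U,T⟩ = ⟨F, exp(ad_U)(T)⟩`; in coordinates
(dual basis), `F_U = α ᵥ* exp(ad_U)` where `α` is the coordinate vector of `F`. -/
def OmegaG2 (α : Fin 7 → ℝ) : Set (Fin 7 → ℝ) :=
  {g | ∃ u : Fin 7 → ℝ, g = Matrix.vecMul α (NormedSpace.exp (adG2 u))}


def wt (m : ℕ) : ℝ := ((m + 1).factorial : ℝ)⁻¹

def phiR (x : ℝ) : ℝ := ∑' m : ℕ, wt m * x ^ m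

lemma wt_pos (m : ℕ) : 0 < wt m := by
  simp [wt, Nat.factorial_pos]

lemma summable_wt_pow (x : ℝ) : Summable (fun m : ℕ => wt m * x ^ m) := by
  refine Summable.of_norm_bounded (g := fun m => |x| ^ m / m.factorial)
    (Real.summable_pow_div_factorial |x|) (fun m => ?_)
  show ‖wt m * x ^ m‖ ≤ |x| ^ m / m.factorial
  rw [norm_mul, norm_pow, Real.norm_eq_abs, Real.norm_eq_abs, abs_of_pos (wt_pos m),
    div_eq_mul_inv, mul_comm (|x| ^ m)]
  have h1 : wt m ≤ (m.factorial : ℝ)⁻¹ := by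
    unfold wt
    apply inv_anti₀
    · exact_mod_cast Nat.factorial_pos m
    · exact_mod_cast Nat.factorial_le (Nat.le_succ m)
  exact mul_le_mul_of_nonneg_right h1 (pow_nonneg (abs_nonneg x) m)

lemma real_exp_eq_tsum (x : ℝ) : Real.exp x = ∑' n : ℕ, (n.factorial : ℝ)⁻¹ * x ^ n := by
  rw [Real.exp_eq_exp_ℝ, NormedSpace.exp_eq_tsum ℝ]
  simp [smul_eq_mul]

lemma summable_exp_series (x : ℝ) : Summable (fun n : ℕ => (n.factorial : ℝ)⁻¹ * x ^ n) := by
  refine Summable.of_norm_bounded (g := fun m => |x| ^ m / m.factorial)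
    (Real.summable_pow_div_factorial |x|) (fun m => ?_)
  show ‖(m.factorial : ℝ)⁻¹ * x ^ m‖ ≤ |x| ^ m / m.factorial
  rw [norm_mul, norm_pow, Real.norm_eq_abs, Real.norm_eq_abs, div_eq_inv_mul,
    mul_comm ((m.factorial : ℝ)⁻¹), abs_of_nonneg (by positivity : (0:ℝ) ≤ (m.factorial : ℝ)⁻¹),
    mul_comm (|x| ^ m), mul_comm ((m.factorial : ℝ)⁻¹)]

lemma tsum_wt_pow_succ (x : ℝ) : ∑' m : ℕ, wt m * x ^ (m + 1) = Real.exp x - 1 := by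
  have h := real_exp_eq_tsum x
  rw [Summable.tsum_eq_zero_add (summable_exp_series x)] at h
  simp only [pow_zero, Nat.factorial_zero, Nat.cast_one, inv_one, mul_one] at h
  rw [show ∑' m : ℕ, wt m * x ^ (m + 1) = ∑' m : ℕ, ((m+1).factorial : ℝ)⁻¹ * x ^ (m+1) from rfl]
  linarith

lemma mul_phiR (x : ℝ) : x * phiR x = Real.exp x - 1 := by
  rw [phiR, ← tsum_mul_left, ← tsum_wt_pow_succ x]
  exact tsum_congr fun m => by ring

lemma phiR_zero : phiR 0 = 1 := by
  rw [phiR, tsum_eq_single 0 (fun m hm => by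
    rcases Nat.exists_eq_succ_of_ne_zero hm with ⟨l, rfl⟩
    simp)]
  simp [wt]

lemma phiR_pos (x : ℝ) : 0 < phiR x := by
  rcases lt_trichotomy x 0 with h | h | h
  · have h1 := mul_phiR x
    have h2 : Real.exp x < 1 := Real.exp_lt_one_iff.2 h
    nlinarith
  · simp [h, phiR_zero]
  · have h1 := mul_phiR x
    have h2 : x + 1 ≤ Real.exp x := Real.add_one_le_exp x
    nlinarith

lemma tsum_wt_der (x : ℝ) : ∑' m : ℕ, wt m * ((m + 1) * x ^ m) = Real.exp x := by
  rw [real_exp_eq_tsum]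
  refine tsum_congr fun m => ?_
  rw [wt, Nat.factorial_succ]
  push_cast
  rw [mul_inv]
  field_simp

def adE (u : Fin 7 → ℝ) : Matrix (Fin 7) (Fin 7) ℝ := Matrix.of fun k j =>
  if k = 0 then (if j = 0 then u 5 else if j = 5 then -u 0 else 0)
  else if k = 2 then (if j = 2 then u 6 else if j = 6 then -u 2 else 0)
  else if k = 3 then (if j = 0 then -u 1 else if j = 1 then u 0 else if j = 3 then u 5
    else if j = 5 then -u 3 else 0)
  else if k = 4 then (if j = 0 then -u 2 else if j = 2 then u 0 else if j = 4 then u 5 + u 6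
    else if j = 5 then -u 4 else if j = 6 then -u 4 else 0)
  else 0

set_option maxHeartbeats 2000000 in
lemma adG2_eq (u : Fin 7 → ℝ) : adG2 u = adE u := by
  funext k j
  fin_cases k <;> fin_cases j <;>
    simp [adG2, adE, g2br, g2half, Fin.sum_univ_seven, Pi.single_apply]

/-- (4,2)-entry of `(adG2 u)^(m+1)`. -/
def ddS (u : Fin 7 → ℝ) (m : ℕ) : ℝ :=
  if u 5 = 0 then u 0 * (m + 1) * u 6 ^ m
  else u 0 * ((u 5 + u 6) ^ (m + 1) - u 6 ^ (m + 1)) / u 5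

lemma ddS_zero (u : Fin 7 → ℝ) : ddS u 0 = u 0 := by
  unfold ddS; split_ifs with h
  · simp
  · field_simp
    ring

lemma ddS_succ (u : Fin 7 → ℝ) (m : ℕ) :
    ddS u (m + 1) = u 0 * u 6 ^ (m + 1) + (u 5 + u 6) * ddS u m := by
  unfold ddS; split_ifs with h
  · rw [h]; push_cast; ring
  · field_simp; ring

set_option maxHeartbeats 2000000 in
lemma pow_cols (u : Fin 7 → ℝ) : ∀ m : ℕ, ∀ k : Fin 7,
    ((adG2 u ^ (m+1)) k 1 = if k = 3 then u 0 * u 5 ^ m else 0) ∧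
    ((adG2 u ^ (m+1)) k 2 = if k = 2 then u 6 ^ (m+1) else if k = 4 then ddS u m else 0) ∧
    ((adG2 u ^ (m+1)) k 3 = if k = 3 then u 5 ^ (m+1) else 0) ∧
    ((adG2 u ^ (m+1)) k 4 = if k = 4 then (u 5 + u 6) ^ (m+1) else 0) := by
  intro m
  induction m with
  | zero =>
    intro k
    rw [pow_one, adG2_eq]
    fin_cases k <;> simp [adE, ddS_zero]
  | succ m ih =>
    intro k
    refine ⟨?_, ?_, ?_, ?_⟩
    · rw [pow_succ', Matrix.mul_apply, Fin.sum_univ_seven,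
        (ih 0).1, (ih 1).1, (ih 2).1, (ih 3).1, (ih 4).1, (ih 5).1, (ih 6).1, adG2_eq]
      fin_cases k <;> simp [adE] <;> ring
    · rw [pow_succ', Matrix.mul_apply, Fin.sum_univ_seven,
        (ih 0).2.1, (ih 1).2.1, (ih 2).2.1, (ih 3).2.1, (ih 4).2.1, (ih 5).2.1, (ih 6).2.1, adG2_eq]
      fin_cases k <;> simp [adE, ddS_succ] <;> ring
    · rw [pow_succ', Matrix.mul_apply, Fin.sum_univ_seven,
        (ih 0).2.2.1, (ih 1).2.2.1, (ih 2).2.2.1, (ih 3).2.2.1, (ih 4).2.2.1, (ih 5).2.2.1,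
        (ih 6).2.2.1, adG2_eq]
      fin_cases k <;> simp [adE] <;> ring
    · rw [pow_succ', Matrix.mul_apply, Fin.sum_univ_seven,
        (ih 0).2.2.2, (ih 1).2.2.2, (ih 2).2.2.2, (ih 3).2.2.2, (ih 4).2.2.2, (ih 5).2.2.2,
        (ih 6).2.2.2, adG2_eq]
      fin_cases k <;> simp [adE] <;> ring

def derS (x : ℝ) : ℕ → ℝ
  | 0 => 0
  | (m+1) => (m+1) * x ^ m

lemma derS_succ (x : ℝ) (m : ℕ) : derS x (m+1) = x * derS x m + x ^ m := by
  cases m with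
  | zero => simp [derS]
  | succ l => simp [derS]; push_cast; ring

set_option maxHeartbeats 2000000 in
lemma pow_cols' (u : Fin 7 → ℝ) (h2 : u 2 = 0) : ∀ m : ℕ, ∀ k : Fin 7,
    ((adG2 u ^ (m+1)) k 0 = if k = 0 then u 5 ^ (m+1)
      else if k = 3 then -((m+1) * u 1 * u 5 ^ m) else 0) ∧
    ((adG2 u ^ (m+1)) k 5 = if k = 0 then -(u 0 * u 5 ^ m)
      else if k = 3 then u 0 * u 1 * derS (u 5) m - u 3 * u 5 ^ m
      else if k = 4 then -(u 4 * (u 5 + u 6) ^ m) else 0) ∧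
    ((adG2 u ^ (m+1)) k 6 = if k = 4 then -(u 4 * (u 5 + u 6) ^ m) else 0) := by
  intro m
  induction m with
  | zero =>
    intro k
    rw [pow_one, adG2_eq]
    fin_cases k <;> simp [adE, derS, h2]
  | succ m ih =>
    intro k
    refine ⟨?_, ?_, ?_⟩
    · rw [pow_succ', Matrix.mul_apply, Fin.sum_univ_seven,
        (ih 0).1, (ih 1).1, (ih 2).1, (ih 3).1, (ih 4).1, (ih 5).1, (ih 6).1, adG2_eq]
      fin_cases k <;> simp [adE, h2] <;> push_cast <;> ring
    · rw [pow_succ', Matrix.mul_apply, Fin.sum_univ_seven,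
        (ih 0).2.1, (ih 1).2.1, (ih 2).2.1, (ih 3).2.1, (ih 4).2.1, (ih 5).2.1, (ih 6).2.1,
        adG2_eq]
      fin_cases k <;> simp [adE, h2, derS_succ] <;> push_cast <;> ring
    · rw [pow_succ', Matrix.mul_apply, Fin.sum_univ_seven,
        (ih 0).2.2, (ih 1).2.2, (ih 2).2.2, (ih 3).2.2, (ih 4).2.2, (ih 5).2.2, (ih 6).2.2,
        adG2_eq]
      fin_cases k <;> simp [adE, h2] <;> push_cast <;> ring

lemma exp_entry {n : ℕ} (A : Matrix (Fin n) (Fin n) ℝ) (k j : Fin n) :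
    NormedSpace.exp A k j = ∑' m : ℕ, ((m.factorial : ℝ))⁻¹ * (A ^ m) k j := by
  have hc : Continuous fun M : Matrix (Fin n) (Fin n) ℝ => M k j :=
    (continuous_apply j).comp (continuous_apply k)
  letI : SeminormedRing (Matrix (Fin n) (Fin n) ℝ) := Matrix.linftyOpSemiNormedRing
  letI : NormedRing (Matrix (Fin n) (Fin n) ℝ) := Matrix.linftyOpNormedRing
  letI : NormedAlgebra ℝ (Matrix (Fin n) (Fin n) ℝ) := Matrix.linftyOpNormedAlgebra
  have h := NormedSpace.exp_series_hasSum_exp' (𝕂 := ℝ) A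
  have h2 := h.map (Pi.evalAddMonoidHom (fun _ : Fin n => ℝ) j |>.comp
      (Pi.evalAddMonoidHom (fun _ : Fin n => Fin n → ℝ) k)) hc
  exact h2.tsum_eq.symm

lemma exp_entry_summable {n : ℕ} (A : Matrix (Fin n) (Fin n) ℝ) (k j : Fin n) :
    Summable (fun m : ℕ => ((m.factorial : ℝ))⁻¹ * (A ^ m) k j) := by
  have hc : Continuous fun M : Matrix (Fin n) (Fin n) ℝ => M k j :=
    (continuous_apply j).comp (continuous_apply k)
  letI : SeminormedRing (Matrix (Fin n) (Fin n) ℝ) := Matrix.linftyOpSemiNormedRing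
  letI : NormedRing (Matrix (Fin n) (Fin n) ℝ) := Matrix.linftyOpNormedRing
  letI : NormedAlgebra ℝ (Matrix (Fin n) (Fin n) ℝ) := Matrix.linftyOpNormedAlgebra
  have h := NormedSpace.exp_series_hasSum_exp' (𝕂 := ℝ) A
  have h2 := (h.map (Pi.evalAddMonoidHom (fun _ : Fin n => ℝ) j |>.comp
      (Pi.evalAddMonoidHom (fun _ : Fin n => Fin n → ℝ) k)) hc).summable
  exact h2

lemma exp_entry_summable' {n : ℕ} (A : Matrix (Fin n) (Fin n) ℝ) (k j : Fin n) :
    Summable (fun m : ℕ => wt m * (A ^ (m + 1)) k j) := by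
  have h := (summable_nat_add_iff
    (f := fun m : ℕ => ((m.factorial : ℝ))⁻¹ * (A ^ m) k j) 1).2 (exp_entry_summable A k j)
  exact h.congr fun m => by simp [wt]

lemma exp_entry' {n : ℕ} (A : Matrix (Fin n) (Fin n) ℝ) (k j : Fin n) :
    NormedSpace.exp A k j
      = (if k = j then 1 else 0) + ∑' m : ℕ, wt m * (A ^ (m + 1)) k j := by
  rw [exp_entry, Summable.tsum_eq_zero_add (exp_entry_summable A k j)]
  have h2 : ∀ m : ℕ, (((m+1).factorial : ℝ))⁻¹ * (A ^ (m+1)) k j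
      = wt m * (A ^ (m+1)) k j := fun m => rfl
  rw [tsum_congr h2]
  simp [Matrix.one_apply]

lemma summable_wt_pow_succ (x : ℝ) : Summable (fun m : ℕ => wt m * x ^ (m + 1)) :=
  ((summable_wt_pow x).mul_left x).congr fun m => by ring

lemma tsum_wt_mul_pow (c x : ℝ) : ∑' m : ℕ, wt m * (c * x ^ m) = c * phiR x := by
  rw [phiR, ← tsum_mul_left]
  exact tsum_congr fun m => by ring

lemma tsum_wt_der' (c x : ℝ) : ∑' m : ℕ, wt m * (c * ((m : ℝ) + 1) * x ^ m) = c * Real.exp x := by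
  rw [← tsum_wt_der x, ← tsum_mul_left]
  exact tsum_congr fun m => by ring

lemma tsum_wt_ddS (u : Fin 7 → ℝ) :
    ∑' m : ℕ, wt m * ddS u m = u 0 * Real.exp (u 6) * phiR (u 5) := by
  by_cases h : u 5 = 0
  · have hc : ∀ m : ℕ, wt m * ddS u m = wt m * (u 0 * ((m : ℝ) + 1) * u 6 ^ m) := by
      intro m; rw [ddS, if_pos h]; try push_cast; try ring
    rw [tsum_congr hc, tsum_wt_der', h, phiR_zero]
    ring
  · have hc : ∀ m : ℕ, wt m * ddS u m
        = u 0 / u 5 * (wt m * (u 5 + u 6) ^ (m+1)) - u 0 / u 5 * (wt m * u 6 ^ (m+1)) := by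
      intro m; rw [ddS, if_neg h]; field_simp; try ring
    rw [tsum_congr hc, Summable.tsum_sub ((summable_wt_pow_succ _).mul_left _)
        ((summable_wt_pow_succ _).mul_left _), tsum_mul_left, tsum_mul_left,
      tsum_wt_pow_succ, tsum_wt_pow_succ]
    have hphi : phiR (u 5) = (Real.exp (u 5) - 1) / u 5 := by
      rw [eq_div_iff h, mul_comm]
      exact mul_phiR (u 5)
    rw [hphi, Real.exp_add]
    field_simp
    ring

lemma expcol1 (u : Fin 7 → ℝ) (k : Fin 7) :
    NormedSpace.exp (adG2 u) k 1 =
      if k = 1 then 1 else if k = 3 then u 0 * phiR (u 5) else 0 := by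
  by_cases h3 : k = 3
  · subst h3
    rw [exp_entry', tsum_congr (fun m => by rw [(pow_cols u m 3).1, if_pos rfl] :
      ∀ m : ℕ, wt m * ((adG2 u ^ (m+1)) 3 1) = wt m * (u 0 * u 5 ^ m)), tsum_wt_mul_pow,
      if_neg (by decide : ¬(3:Fin 7) = 1), if_neg (by decide : ¬(3:Fin 7) = 1), if_pos rfl,
      zero_add]
  · rw [exp_entry', tsum_congr (fun m => by rw [(pow_cols u m k).1, if_neg h3, mul_zero] :
      ∀ m : ℕ, wt m * ((adG2 u ^ (m+1)) k 1) = 0), tsum_zero, if_neg h3, add_zero]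

lemma expcol2 (u : Fin 7 → ℝ) (k : Fin 7) :
    NormedSpace.exp (adG2 u) k 2 =
      if k = 2 then Real.exp (u 6)
      else if k = 4 then u 0 * Real.exp (u 6) * phiR (u 5) else 0 := by
  by_cases h2 : k = 2
  · subst h2
    rw [exp_entry', tsum_congr (fun m => by rw [(pow_cols u m 2).2.1, if_pos rfl] :
      ∀ m : ℕ, wt m * ((adG2 u ^ (m+1)) 2 2) = wt m * (u 6) ^ (m+1)), tsum_wt_pow_succ,
      if_pos rfl, if_pos rfl]
    ring
  · by_cases h4 : k = 4
    · subst h4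
      rw [exp_entry', tsum_congr (fun m => by
          rw [(pow_cols u m 4).2.1, if_neg (by decide : ¬(4:Fin 7) = 2), if_pos rfl] :
        ∀ m : ℕ, wt m * ((adG2 u ^ (m+1)) 4 2) = wt m * ddS u m), tsum_wt_ddS,
        if_neg (by decide : ¬(4:Fin 7) = 2), if_neg (by decide : ¬(4:Fin 7) = 2), if_pos rfl,
        zero_add]
    · rw [exp_entry', tsum_congr (fun m => by
          rw [(pow_cols u m k).2.1, if_neg h2, if_neg h4, mul_zero] :
        ∀ m : ℕ, wt m * ((adG2 u ^ (m+1)) k 2) = 0), tsum_zero, if_neg h2, if_neg h2,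
        if_neg h4, add_zero]

lemma expcol3 (u : Fin 7 → ℝ) (k : Fin 7) :
    NormedSpace.exp (adG2 u) k 3 =
      if k = 3 then Real.exp (u 5) else 0 := by
  by_cases h3 : k = 3
  · subst h3
    rw [exp_entry', tsum_congr (fun m => by rw [(pow_cols u m 3).2.2.1, if_pos rfl] :
      ∀ m : ℕ, wt m * ((adG2 u ^ (m+1)) 3 3) = wt m * (u 5) ^ (m+1)), tsum_wt_pow_succ,
      if_pos rfl, if_pos rfl]
    ring
  · rw [exp_entry', tsum_congr (fun m => by rw [(pow_cols u m k).2.2.1, if_neg h3, mul_zero] :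
      ∀ m : ℕ, wt m * ((adG2 u ^ (m+1)) k 3) = 0), tsum_zero, if_neg h3, if_neg h3, add_zero]

lemma expcol4 (u : Fin 7 → ℝ) (k : Fin 7) :
    NormedSpace.exp (adG2 u) k 4 =
      if k = 4 then Real.exp (u 5 + u 6) else 0 := by
  by_cases h4 : k = 4
  · subst h4
    rw [exp_entry', tsum_congr (fun m => by rw [(pow_cols u m 4).2.2.2, if_pos rfl] :
      ∀ m : ℕ, wt m * ((adG2 u ^ (m+1)) 4 4) = wt m * (u 5 + u 6) ^ (m+1)), tsum_wt_pow_succ,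
      if_pos rfl, if_pos rfl]
    ring
  · rw [exp_entry', tsum_congr (fun m => by rw [(pow_cols u m k).2.2.2, if_neg h4, mul_zero] :
      ∀ m : ℕ, wt m * ((adG2 u ^ (m+1)) k 4) = 0), tsum_zero, if_neg h4, if_neg h4, add_zero]

/-- `∑' m, wt m * derS x m`. -/
def KdS (x : ℝ) : ℝ := ∑' m : ℕ, wt m * derS x m

lemma expcol0 (u : Fin 7 → ℝ) (hu2 : u 2 = 0) (k : Fin 7) :
    NormedSpace.exp (adG2 u) k 0 =
      if k = 0 then Real.exp (u 5)
      else if k = 3 then -(u 1 * Real.exp (u 5)) else 0 := by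
  by_cases h0 : k = 0
  · subst h0
    rw [exp_entry', tsum_congr (fun m => by rw [(pow_cols' u hu2 m 0).1, if_pos rfl] :
      ∀ m : ℕ, wt m * ((adG2 u ^ (m+1)) 0 0) = wt m * (u 5) ^ (m+1)), tsum_wt_pow_succ,
      if_pos rfl, if_pos rfl]
    ring
  · by_cases h3 : k = 3
    · subst h3
      rw [exp_entry', tsum_congr (fun m => by
          rw [(pow_cols' u hu2 m 3).1, if_neg (by decide : ¬(3:Fin 7) = 0), if_pos rfl]; ring :
        ∀ m : ℕ, wt m * ((adG2 u ^ (m+1)) 3 0) = wt m * ((-u 1) * ((m : ℝ) + 1) * u 5 ^ m)),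
        tsum_wt_der', if_neg (by decide : ¬(3:Fin 7) = 0), if_neg (by decide : ¬(3:Fin 7) = 0),
        if_pos rfl, zero_add]
      ring
    · rw [exp_entry', tsum_congr (fun m => by
          rw [(pow_cols' u hu2 m k).1, if_neg h0, if_neg h3, mul_zero] :
        ∀ m : ℕ, wt m * ((adG2 u ^ (m+1)) k 0) = 0), tsum_zero, if_neg h0, if_neg h0,
        if_neg h3, add_zero]

lemma expcol6 (u : Fin 7 → ℝ) (hu2 : u 2 = 0) (k : Fin 7) :
    NormedSpace.exp (adG2 u) k 6 =
      if k = 4 then -(u 4 * phiR (u 5 + u 6)) else if k = 6 then 1 else 0 := by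
  by_cases h4 : k = 4
  · subst h4
    rw [exp_entry', tsum_congr (fun m => by rw [(pow_cols' u hu2 m 4).2.2, if_pos rfl]; ring :
      ∀ m : ℕ, wt m * ((adG2 u ^ (m+1)) 4 6) = wt m * ((-u 4) * (u 5 + u 6) ^ m)),
      tsum_wt_mul_pow, if_neg (by decide : ¬(4:Fin 7) = 6), if_pos rfl, zero_add]
    ring
  · rw [exp_entry', tsum_congr (fun m => by rw [(pow_cols' u hu2 m k).2.2, if_neg h4, mul_zero] :
      ∀ m : ℕ, wt m * ((adG2 u ^ (m+1)) k 6) = 0), tsum_zero, if_neg h4, add_zero]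

lemma expcol5 (u : Fin 7 → ℝ) (hu2 : u 2 = 0) (k : Fin 7) :
    NormedSpace.exp (adG2 u) k 5 =
      if k = 0 then -(u 0 * phiR (u 5))
      else if k = 3 then u 0 * u 1 * KdS (u 5) - u 3 * phiR (u 5)
      else if k = 4 then -(u 4 * phiR (u 5 + u 6))
      else if k = 5 then 1 else 0 := by
  by_cases h0 : k = 0
  · subst h0
    rw [exp_entry', tsum_congr (fun m => by rw [(pow_cols' u hu2 m 0).2.1, if_pos rfl]; ring :
      ∀ m : ℕ, wt m * ((adG2 u ^ (m+1)) 0 5) = wt m * ((-u 0) * u 5 ^ m)), tsum_wt_mul_pow,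
      if_neg (by decide : ¬(0:Fin 7) = 5), if_pos rfl, zero_add]
    ring
  · by_cases h3 : k = 3
    · subst h3
      rw [exp_entry', tsum_congr (fun m => by
          rw [(pow_cols' u hu2 m 3).2.1, if_neg (by decide : ¬(3:Fin 7) = 0), if_pos rfl] :
        ∀ m : ℕ, wt m * ((adG2 u ^ (m+1)) 3 5)
          = wt m * (u 0 * u 1 * derS (u 5) m - u 3 * u 5 ^ m))]
      have hsum : Summable (fun m : ℕ =>
          wt m * (u 0 * u 1 * derS (u 5) m - u 3 * u 5 ^ m)) := by
        have h := exp_entry_summable' (adG2 u) 3 5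
        exact h.congr fun m => by
          rw [(pow_cols' u hu2 m 3).2.1, if_neg (by decide : ¬(3:Fin 7) = 0), if_pos rfl]
      have hsub : Summable (fun m : ℕ => wt m * (u 3 * u 5 ^ m)) :=
        ((summable_wt_pow (u 5)).mul_left (u 3)).congr fun m => by ring
      have hmain : Summable (fun m : ℕ => wt m * (u 0 * u 1 * derS (u 5) m)) := by
        refine (hsum.add hsub).congr fun m => by ring
      rw [tsum_congr (fun m => by ring :
        ∀ m : ℕ, wt m * (u 0 * u 1 * derS (u 5) m - u 3 * u 5 ^ m)
          = wt m * (u 0 * u 1 * derS (u 5) m) - wt m * (u 3 * u 5 ^ m)),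
        Summable.tsum_sub hmain hsub, tsum_wt_mul_pow]
      have h1 : ∑' m : ℕ, wt m * (u 0 * u 1 * derS (u 5) m)
          = u 0 * u 1 * KdS (u 5) := by
        rw [KdS, ← tsum_mul_left]
        exact tsum_congr fun m => by ring
      rw [h1, if_neg (by decide : ¬(3:Fin 7) = 5), if_neg (by decide : ¬(3:Fin 7) = 0),
        if_pos rfl, zero_add]
    · by_cases h4 : k = 4
      · subst h4
        rw [exp_entry', tsum_congr (fun m => by
            rw [(pow_cols' u hu2 m 4).2.1, if_neg (by decide : ¬(4:Fin 7) = 0),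
              if_neg (by decide : ¬(4:Fin 7) = 3), if_pos rfl]; ring :
          ∀ m : ℕ, wt m * ((adG2 u ^ (m+1)) 4 5) = wt m * ((-u 4) * (u 5 + u 6) ^ m)),
          tsum_wt_mul_pow, if_neg (by decide : ¬(4:Fin 7) = 5),
          if_neg (by decide : ¬(4:Fin 7) = 0), if_neg (by decide : ¬(4:Fin 7) = 3), if_pos rfl,
          zero_add]
        ring
      · rw [exp_entry', tsum_congr (fun m => by
            rw [(pow_cols' u hu2 m k).2.1, if_neg h0, if_neg h3, if_neg h4, mul_zero] :
          ∀ m : ℕ, wt m * ((adG2 u ^ (m+1)) k 5) = 0), tsum_zero, if_neg h0,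
          if_neg h3, if_neg h4, add_zero]

set_option maxHeartbeats 4000000 in
/-- If `F ∈ 𝔊₂*` has coordinates `(α₁,…,α₅,α,β)` with `α₄α₅ ≠ 0`, then
`Ω_F(𝔊₂) = {(x₁*,…,x₅*,x*,y*) : x₂* − x₃*x₄*/x₅* = (α₂α₅−α₃α₄)/α₅,
α₄x₄* > 0, α₅x₅* > 0}`. -/
theorem omega_G2_quadric (α : Fin 7 → ℝ) (h45 : α 3 * α 4 ≠ 0) :
    OmegaG2 α = {g : Fin 7 → ℝ |
      g 1 - g 2 * g 3 / g 4 = (α 1 * α 4 - α 2 * α 3) / α 4 ∧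
      α 3 * g 3 > 0 ∧ α 4 * g 4 > 0} := by
  have h3 : α 3 ≠ 0 := left_ne_zero_of_mul h45
  have h4 : α 4 ≠ 0 := right_ne_zero_of_mul h45
  ext g
  simp only [OmegaG2, Set.mem_setOf_eq]
  constructor
  · rintro ⟨u, rfl⟩
    have hv : ∀ j, Matrix.vecMul α (NormedSpace.exp (adG2 u)) j
        = ∑ k, α k * NormedSpace.exp (adG2 u) k j := fun j => by
      simp [Matrix.vecMul, dotProduct]
    have hg1 : Matrix.vecMul α (NormedSpace.exp (adG2 u)) 1
        = α 1 + α 3 * (u 0 * phiR (u 5)) := by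
      rw [hv 1, Fin.sum_univ_seven, expcol1, expcol1, expcol1, expcol1, expcol1, expcol1,
        expcol1]
      simp
    have hg2 : Matrix.vecMul α (NormedSpace.exp (adG2 u)) 2
        = α 2 * Real.exp (u 6) + α 4 * (u 0 * Real.exp (u 6) * phiR (u 5)) := by
      rw [hv 2, Fin.sum_univ_seven, expcol2, expcol2, expcol2, expcol2, expcol2, expcol2,
        expcol2]
      simp
    have hg3 : Matrix.vecMul α (NormedSpace.exp (adG2 u)) 3
        = α 3 * Real.exp (u 5) := by
      rw [hv 3, Fin.sum_univ_seven, expcol3, expcol3, expcol3, expcol3, expcol3, expcol3,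
        expcol3]
      simp
    have hg4 : Matrix.vecMul α (NormedSpace.exp (adG2 u)) 4
        = α 4 * Real.exp (u 5 + u 6) := by
      rw [hv 4, Fin.sum_univ_seven, expcol4, expcol4, expcol4, expcol4, expcol4, expcol4,
        expcol4]
      simp
    have e5 := Real.exp_pos (u 5)
    have e6 := Real.exp_pos (u 6)
    refine ⟨?_, ?_, ?_⟩
    · rw [hg1, hg2, hg3, hg4, Real.exp_add]
      field_simp
      ring
    · rw [hg3]
      have h32 : 0 < α 3 * α 3 := mul_self_pos.2 h3
      nlinarith
    · rw [hg4]
      have h42 : 0 < α 4 * α 4 := mul_self_pos.2 h4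
      have e56 := Real.exp_pos (u 5 + u 6)
      nlinarith
  · rintro ⟨hq, hp3, hp4⟩
    have hg3 : g 3 ≠ 0 := by
      intro h
      rw [h, mul_zero] at hp3
      exact lt_irrefl 0 hp3
    have hg4 : g 4 ≠ 0 := by
      intro h
      rw [h, mul_zero] at hp4
      exact lt_irrefl 0 hp4
    have hr3 : 0 < g 3 / α 3 := by
      rcases mul_pos_iff.1 hp3 with ⟨ha, hb⟩ | ⟨ha, hb⟩
      · exact div_pos hb ha
      · exact div_pos_of_neg_of_neg hb ha
    have hr4 : 0 < g 4 / α 4 := by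
      rcases mul_pos_iff.1 hp4 with ⟨ha, hb⟩ | ⟨ha, hb⟩
      · exact div_pos hb ha
      · exact div_pos_of_neg_of_neg hb ha
    set a := Real.log (g 3 / α 3) with ha
    set b := Real.log ((g 4 / α 4) / (g 3 / α 3)) with hb
    have hea : Real.exp a = g 3 / α 3 := Real.exp_log hr3
    have heb : Real.exp b = (g 4 / α 4) / (g 3 / α 3) := Real.exp_log (div_pos hr4 hr3)
    have heab : Real.exp (a + b) = g 4 / α 4 := by
      rw [Real.exp_add, hea, heb]
      field_simp
    have hpa : phiR a ≠ 0 := ne_of_gt (phiR_pos a)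
    have hpab : phiR (a + b) ≠ 0 := ne_of_gt (phiR_pos (a + b))
    have hexb : Real.exp b ≠ 0 := Real.exp_ne_zero b
    set u0 := (g 2 - α 2 * Real.exp b) / (α 4 * Real.exp b * phiR a) with hu0
    set u1 := (α 0 - g 0 * α 3 / g 3) / α 3 with hu1
    set u4 := (α 6 - g 6) / (α 4 * phiR (a + b)) with hu4
    set u3 := (α 5 + α 3 * (u0 * u1 * KdS a) - α 0 * (u0 * phiR a)
        - α 4 * (u4 * phiR (a + b)) - g 5) / (α 3 * phiR a) with hu3
    refine ⟨![u0, u1, 0, u3, u4, a, b], ?_⟩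
    set u : Fin 7 → ℝ := ![u0, u1, 0, u3, u4, a, b] with hu
    have hu2 : u 2 = 0 := rfl
    have e0 : u 0 = u0 := rfl
    have e1 : u 1 = u1 := rfl
    have e3 : u 3 = u3 := rfl
    have e4 : u 4 = u4 := rfl
    have e5 : u 5 = a := rfl
    have e6 : u 6 = b := rfl
    have hv : ∀ j, Matrix.vecMul α (NormedSpace.exp (adG2 u)) j
        = ∑ k, α k * NormedSpace.exp (adG2 u) k j := fun j => by
      simp [Matrix.vecMul, dotProduct]
    funext j
    fin_cases j
    · show g 0 = Matrix.vecMul α (NormedSpace.exp (adG2 u)) 0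
      rw [hv 0, Fin.sum_univ_seven, expcol0 u hu2, expcol0 u hu2, expcol0 u hu2, expcol0 u hu2,
        expcol0 u hu2, expcol0 u hu2, expcol0 u hu2]
      simp only [e0, e1, e3, e4, e5, e6]
      simp
      rw [hea, hu1]
      field_simp
      ring
    · show g 1 = Matrix.vecMul α (NormedSpace.exp (adG2 u)) 1
      rw [hv 1, Fin.sum_univ_seven, expcol1, expcol1, expcol1, expcol1, expcol1, expcol1,
        expcol1]
      simp only [e0, e1, e3, e4, e5, e6]
      simp
      have key : α 3 * (u0 * phiR a) = g 2 * g 3 / g 4 - α 2 * α 3 / α 4 := by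
        rw [hu0, heb]
        field_simp
      have key2 : (α 1 * α 4 - α 2 * α 3) / α 4 = α 1 - α 2 * α 3 / α 4 := by
        field_simp
        try ring
      linarith [hq, key, key2]
    · show g 2 = Matrix.vecMul α (NormedSpace.exp (adG2 u)) 2
      rw [hv 2, Fin.sum_univ_seven, expcol2, expcol2, expcol2, expcol2, expcol2, expcol2,
        expcol2]
      simp only [e0, e1, e3, e4, e5, e6]
      simp
      rw [hu0]
      field_simp
      ring
    · show g 3 = Matrix.vecMul α (NormedSpace.exp (adG2 u)) 3
      rw [hv 3, Fin.sum_univ_seven, expcol3, expcol3, expcol3, expcol3, expcol3, expcol3,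
        expcol3]
      simp only [e5]
      simp
      rw [hea]
      field_simp
    · show g 4 = Matrix.vecMul α (NormedSpace.exp (adG2 u)) 4
      rw [hv 4, Fin.sum_univ_seven, expcol4, expcol4, expcol4, expcol4, expcol4, expcol4,
        expcol4]
      simp only [e5, e6]
      simp
      rw [heab]
      field_simp
    · show g 5 = Matrix.vecMul α (NormedSpace.exp (adG2 u)) 5
      rw [hv 5, Fin.sum_univ_seven, expcol5 u hu2, expcol5 u hu2, expcol5 u hu2, expcol5 u hu2,
        expcol5 u hu2, expcol5 u hu2, expcol5 u hu2]
      simp only [e0, e1, e3, e4, e5, e6]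
      simp
      rw [hu3]
      field_simp
      ring
    · show g 6 = Matrix.vecMul α (NormedSpace.exp (adG2 u)) 6
      rw [hv 6, Fin.sum_univ_seven, expcol6 u hu2, expcol6 u hu2, expcol6 u hu2, expcol6 u hu2,
        expcol6 u hu2, expcol6 u hu2, expcol6 u hu2]
      simp only [e4, e5, e6]
      simp
      rw [hu4]
      field_simp
      ring

end
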